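/- Fix a real number R > 0. With Γ₃(a) = π^{3/2} Γ(a) Γ(a − 1/2) Γ(a − 1), B(k) = 8 π^{3k²} R^{6k²} / (Γ₃(k²) · (2k²)³), and V(k) = √k · (2π)^{k²/2 + k/2 − 1} / ∏_{j=1}^{k−1} j!, one has lim_{k→∞} (log (B(k)/V(k))) / (k² · log k) = −11/2. -/

import Mathlib

open Filter Real

open Nat

lemma log_fact_ub (m : ℕ) : Real.log (m !) ≤ m * Real.log m := by
  rcases Nat.eq_zero_or_pos m with h | h
  · simp [h]
  calc Real.log (m !) ≤ Real.log ((m:ℝ) ^ m) := by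
        apply Real.log_le_log (by positivity)
        exact_mod_cast Nat.factorial_le_pow m
    _ = m * Real.log m := Real.log_pow m m

lemma log_fact_lb (m : ℕ) : (m:ℝ) * Real.log m - m ≤ Real.log (m !) := by
  rcases Nat.eq_zero_or_pos m with h | h
  · simp [h]
  have h1 : (m:ℝ)^m / m ! ≤ Real.exp m :=
    Real.pow_div_factorial_le_exp (x := (m:ℝ)) (by positivity) m
  have h2 : (m:ℝ)^m ≤ Real.exp m * m ! := by
    rw [div_le_iff₀ (by positivity)] at h1; linarith
  have h3 := Real.log_le_log (by positivity) h2
  rw [Real.log_mul (by positivity) (by positivity), Real.log_exp, Real.log_pow] at h3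
  linarith

lemma key_lim (a b c d e f : ℝ) :
    Tendsto (fun k : ℕ => (a + b*(k:ℝ) + c*(k:ℝ)^2 + d*Real.log k + e*((k:ℝ)*Real.log k)
        + f*((k:ℝ)^2*Real.log k)) / ((k:ℝ)^2 * Real.log k)) atTop (nhds f) := by
  have hx : Tendsto (fun k : ℕ => (k:ℝ)) atTop atTop := tendsto_natCast_atTop_atTop
  have hL : Tendsto (fun k : ℕ => Real.log k) atTop atTop :=
    Real.tendsto_log_atTop.comp hx
  have hx2 : Tendsto (fun k : ℕ => (k:ℝ)^2) atTop atTop := by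
    simpa [sq] using hx.atTop_mul_atTop₀ hx
  have hxL : Tendsto (fun k : ℕ => (k:ℝ) * Real.log k) atTop atTop := hx.atTop_mul_atTop₀ hL
  have hx2L : Tendsto (fun k : ℕ => (k:ℝ)^2 * Real.log k) atTop atTop := hx2.atTop_mul_atTop₀ hL
  have t1 : Tendsto (fun k : ℕ => a / ((k:ℝ)^2 * Real.log k)) atTop (nhds 0) :=
    tendsto_const_nhds.div_atTop hx2L
  have t2 : Tendsto (fun k : ℕ => b / ((k:ℝ) * Real.log k)) atTop (nhds 0) :=
    tendsto_const_nhds.div_atTop hxL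
  have t3 : Tendsto (fun k : ℕ => c / Real.log k) atTop (nhds 0) :=
    tendsto_const_nhds.div_atTop hL
  have t4 : Tendsto (fun k : ℕ => d / (k:ℝ)^2) atTop (nhds 0) :=
    tendsto_const_nhds.div_atTop hx2
  have t5 : Tendsto (fun k : ℕ => e / (k:ℝ)) atTop (nhds 0) :=
    tendsto_const_nhds.div_atTop hx
  have main : Tendsto (fun k : ℕ => a / ((k:ℝ)^2 * Real.log k) + b / ((k:ℝ) * Real.log k)
      + c / Real.log k + d / (k:ℝ)^2 + e / (k:ℝ) + f) atTop (nhds f) := by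
    have := ((((t1.add t2).add t3).add t4).add t5).add (tendsto_const_nhds (x := f))
    simpa using this
  apply main.congr'
  filter_upwards [eventually_ge_atTop 2] with k hk
  have hk0 : (0:ℝ) < (k:ℝ) := by exact_mod_cast (by omega : 0 < k)
  have hL0 : 0 < Real.log k := Real.log_pos (by exact_mod_cast hk)
  field_simp

lemma fact_log_bounds (k m : ℕ) (hk : 2 ≤ k) (h1 : k^2 - 2 ≤ m) (h2 : m ≤ k^2 - 1) :
    2*(k:ℝ)^2*Real.log k - 4*Real.log k - 2*(k:ℝ)^2 ≤ Real.log (m !) ∧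
    Real.log (m !) ≤ 2*(k:ℝ)^2*Real.log k := by
  have hk4 : 4 ≤ k^2 := by
    have h := Nat.pow_le_pow_left hk 2; norm_num at h; exact h
  have hk2r : (4:ℝ) ≤ (k:ℝ)^2 := by exact_mod_cast hk4
  have hm2 : 2 ≤ m := by omega
  have hm0 : (0:ℝ) < (m:ℝ) := by exact_mod_cast (by omega : 0 < m)
  have hmr : (k:ℝ)^2 - 2 ≤ (m:ℝ) := by
    have h : (k^2 : ℕ) ≤ m + 2 := by omega
    have := (Nat.cast_le (α := ℝ)).mpr h
    push_cast at this; linarith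
  have hmr2 : (m:ℝ) ≤ (k:ℝ)^2 - 1 := by
    have h : (m + 1 : ℕ) ≤ k^2 := by omega
    have := (Nat.cast_le (α := ℝ)).mpr h
    push_cast at this; linarith
  have hL0 : 0 < Real.log k := Real.log_pos (by exact_mod_cast hk)
  have hlog2 : Real.log 2 ≤ 1 := by
    have := Real.log_le_sub_one_of_pos (x := 2) (by norm_num); linarith
  have hlog2p : 0 < Real.log 2 := Real.log_pos (by norm_num)
  have hlk : Real.log 2 ≤ Real.log k := Real.log_le_log (by norm_num) (by exact_mod_cast hk)
  have hlogk2 : Real.log ((k:ℝ)^2) = 2 * Real.log k := by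
    rw [Real.log_pow]; push_cast; ring
  have hlogm0 : 0 ≤ Real.log m := Real.log_nonneg (by exact_mod_cast (by omega : 1 ≤ m))
  constructor
  · -- lower bound
    have l1 : 2*Real.log k - Real.log 2 ≤ Real.log m := by
      have h := Real.log_le_log (x := (k:ℝ)^2/2) (by positivity) (by linarith : (k:ℝ)^2/2 ≤ (m:ℝ))
      rwa [Real.log_div (by positivity) (by norm_num), hlogk2] at h
    have l2 : ((k:ℝ)^2 - 2) * (2*Real.log k - Real.log 2) ≤ (m:ℝ) * Real.log m := by
      apply mul_le_mul hmr l1 (by linarith) (by positivity)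
    have hb : (k:ℝ)^2 * Real.log 2 ≤ (k:ℝ)^2 := by
      have := mul_le_mul_of_nonneg_left hlog2 (sq_nonneg (k:ℝ)); simpa using this
    have hexp : ((k:ℝ)^2 - 2) * (2*Real.log k - Real.log 2)
        = 2*(k:ℝ)^2*Real.log k - (k:ℝ)^2*Real.log 2 - 4*Real.log k + 2*Real.log 2 := by ring
    have := log_fact_lb m
    linarith
  · -- upper bound
    have u1 : Real.log m ≤ 2*Real.log k := by
      rw [← hlogk2]; exact Real.log_le_log hm0 (by linarith)
    have u2 : (m:ℝ) * Real.log m ≤ (k:ℝ)^2 * (2*Real.log k) := by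
      apply mul_le_mul (by linarith) u1 hlogm0 (by positivity)
    have := log_fact_ub m
    linarith

lemma sum_log_fact_bounds (k : ℕ) (hk : 2 ≤ k) :
    ((k:ℝ)^2 - k)/2 * Real.log k - 2*(k:ℝ)^2 ≤ ∑ j ∈ Finset.Icc 1 (k-1), Real.log (j !) ∧
    ∑ j ∈ Finset.Icc 1 (k-1), Real.log (j !) ≤ ((k:ℝ)^2 - k)/2 * Real.log k := by
  have hk0 : (0:ℝ) < (k:ℝ) := by exact_mod_cast (by omega : 0 < k)
  have hT : ∑ j ∈ Finset.Icc 1 (k-1), (j:ℝ) = ((k:ℝ)^2 - k)/2 := by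
    obtain ⟨m, rfl⟩ : ∃ m, k = m + 1 := ⟨k - 1, by omega⟩
    simp only [Nat.add_sub_cancel]
    have e2 : (∑ j ∈ Finset.Icc 1 m, j) = ∑ i ∈ Finset.range (m+1), i := by
      rw [← Finset.Ico_add_one_right_eq_Icc, Finset.range_eq_Ico]
      apply Finset.sum_subset (by intro x hx; simp at hx ⊢; omega)
      intro x hx hnx; simp at hx hnx; omega
    have e3 : (∑ i ∈ Finset.range (m+1), i) * 2 = (m+1) * m := by
      simpa using Finset.sum_range_id_mul_two (m+1)
    have e4 : ((∑ j ∈ Finset.Icc 1 m, j : ℕ) : ℝ) * 2 = ((m:ℝ)+1) * m := by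
      rw [e2]; exact_mod_cast congrArg (fun n : ℕ => (n:ℝ)) e3
    have e5 : ((∑ j ∈ Finset.Icc 1 m, j : ℕ) : ℝ) = ∑ j ∈ Finset.Icc 1 m, (j:ℝ) := by
      push_cast; rfl
    rw [← e5]; push_cast; linarith [e4]
  have hcard : (Finset.Icc 1 (k-1)).card = k - 1 := by rw [Nat.card_Icc]; omega
  constructor
  · -- lower
    have per : ∀ j ∈ Finset.Icc 1 (k-1), (j:ℝ) * Real.log k - k ≤ Real.log (j !) := by
      intro j hj
      simp only [Finset.mem_Icc] at hj
      have hj0 : (0:ℝ) < (j:ℝ) := by exact_mod_cast (by omega : 0 < j)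
      have hjk : (j:ℝ) ≤ (k:ℝ) := by exact_mod_cast (by omega : j ≤ k)
      have hquot : Real.log k - Real.log j ≤ (k:ℝ)/(j:ℝ) - 1 := by
        have h := Real.log_le_sub_one_of_pos (x := (k:ℝ)/(j:ℝ)) (by positivity)
        rwa [Real.log_div (by positivity) (by positivity)] at h
      have hj1 : (j:ℝ) * ((k:ℝ)/(j:ℝ) - 1) = (k:ℝ) - j := by field_simp
      have hj2 : (j:ℝ) * (Real.log k - Real.log j) ≤ (k:ℝ) - j := by
        calc (j:ℝ) * (Real.log k - Real.log j) ≤ (j:ℝ) * ((k:ℝ)/(j:ℝ) - 1) :=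
              mul_le_mul_of_nonneg_left hquot (by positivity)
          _ = (k:ℝ) - j := hj1
      have := log_fact_lb j
      linarith
    have hsum := Finset.sum_le_sum per
    have hsplit : ∑ j ∈ Finset.Icc 1 (k-1), ((j:ℝ) * Real.log k - k)
        = (∑ j ∈ Finset.Icc 1 (k-1), (j:ℝ)) * Real.log k - ((k:ℝ)-1) * k := by
      rw [Finset.sum_sub_distrib, ← Finset.sum_mul, Finset.sum_const, hcard]
      rw [nsmul_eq_mul, Nat.cast_sub (by omega : 1 ≤ k)]
      push_cast; ring
    rw [hsplit, hT] at hsum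
    linarith [hsum, sq_nonneg (k:ℝ), hk0.le]
  · -- upper
    have per : ∀ j ∈ Finset.Icc 1 (k-1), Real.log (j !) ≤ (j:ℝ) * Real.log k := by
      intro j hj
      simp only [Finset.mem_Icc] at hj
      have hj0 : (0:ℝ) < (j:ℝ) := by exact_mod_cast (by omega : 0 < j)
      have hjk : (j:ℝ) ≤ (k:ℝ) := by exact_mod_cast (by omega : j ≤ k)
      have h1 : Real.log j ≤ Real.log k := Real.log_le_log hj0 hjk
      have h2 : (j:ℝ) * Real.log j ≤ (j:ℝ) * Real.log k := mul_le_mul_of_nonneg_left h1 hj0.le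
      have := log_fact_ub j
      linarith
    have hsum := Finset.sum_le_sum per
    rw [← Finset.sum_mul, hT] at hsum
    exact hsum


/-- The multivariate gamma function `Γ₃(a) = π^{3/2} Γ(a) Γ(a − 1/2) Γ(a − 1)`. -/
noncomputable def Gamma3 (a : ℝ) : ℝ :=
  π ^ ((3 : ℝ) / 2) * Real.Gamma a * Real.Gamma (a - 1 / 2) * Real.Gamma (a - 1)

/-- `B(k) = 8 π^{3k²} R^{6k²} / (Γ₃(k²) (2k²)³)`, the leading ball-volume expression
in `O(3,2k²)/(O(3)×O(2k²))`. -/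
noncomputable def ballVol (R : ℝ) (k : ℕ) : ℝ :=
  8 * π ^ (3 * (k : ℝ) ^ 2) * R ^ (6 * (k : ℝ) ^ 2)
    / (Gamma3 ((k : ℝ) ^ 2) * (2 * (k : ℝ) ^ 2) ^ 3)

/-- `V(k) = √k (2π)^{k²/2 + k/2 − 1} / ∏_{j=1}^{k−1} j!`, the volume of `SU(k)`. -/
noncomputable def suVol (k : ℕ) : ℝ :=
  Real.sqrt (k : ℝ) * (2 * π) ^ ((k : ℝ) ^ 2 / 2 + (k : ℝ) / 2 - 1)
    / ∏ j ∈ Finset.Icc 1 (k - 1), (Nat.factorial j : ℝ)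

lemma numer_expand (R : ℝ) (hR : 0 < R) (k : ℕ) (hk : 2 ≤ k) :
    Real.log (ballVol R k / suVol k) =
      Real.log 8 + 3*(k:ℝ)^2*Real.log π + 6*(k:ℝ)^2*Real.log R
      - (3/2)*Real.log π
      - Real.log (Real.Gamma ((k:ℝ)^2)) - Real.log (Real.Gamma ((k:ℝ)^2 - 1/2))
      - Real.log (Real.Gamma ((k:ℝ)^2 - 1))
      - 3*(Real.log 2 + 2*Real.log k)
      - (1/2)*Real.log k - ((k:ℝ)^2/2 + (k:ℝ)/2 - 1)*Real.log (2*π)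
      + ∑ j ∈ Finset.Icc 1 (k-1), Real.log (j !) := by
  have hπ : (0:ℝ) < π := Real.pi_pos
  have hx0 : (0:ℝ) < (k:ℝ) := by exact_mod_cast (by omega : 0 < k)
  have hk4 : 4 ≤ k^2 := by
    have h := Nat.pow_le_pow_left hk 2; norm_num at h; exact h
  have hk2r : (4:ℝ) ≤ (k:ℝ)^2 := by exact_mod_cast hk4
  have hG1 : 0 < Real.Gamma ((k:ℝ)^2) := Real.Gamma_pos_of_pos (by positivity)
  have hG2 : 0 < Real.Gamma ((k:ℝ)^2 - 1/2) := Real.Gamma_pos_of_pos (by linarith)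
  have hG3 : 0 < Real.Gamma ((k:ℝ)^2 - 1) := Real.Gamma_pos_of_pos (by linarith)
  have hΓ3 : 0 < Gamma3 ((k:ℝ)^2) := by
    unfold Gamma3; positivity
  have hprod : 0 < ∏ j ∈ Finset.Icc 1 (k-1), (j ! : ℝ) := by
    apply Finset.prod_pos; intro j _; exact_mod_cast Nat.factorial_pos j
  have hrpowπ : (0:ℝ) < π ^ (3 * (k:ℝ)^2) := Real.rpow_pos_of_pos hπ _
  have hrpowR : (0:ℝ) < R ^ (6 * (k:ℝ)^2) := Real.rpow_pos_of_pos hR _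
  have hrpow2π : (0:ℝ) < (2*π) ^ ((k:ℝ)^2/2 + (k:ℝ)/2 - 1) := Real.rpow_pos_of_pos (by linarith) _
  have hden : (0:ℝ) < Gamma3 ((k:ℝ)^2) * (2 * (k:ℝ)^2)^3 := by positivity
  have hnum : (0:ℝ) < 8 * π ^ (3 * (k:ℝ)^2) * R ^ (6 * (k:ℝ)^2) := by positivity
  have hsq : (0:ℝ) < Real.sqrt k := Real.sqrt_pos.mpr hx0
  have hB : ballVol R k = (8 * π ^ (3 * (k:ℝ)^2) * R ^ (6 * (k:ℝ)^2))
      / (Gamma3 ((k:ℝ)^2) * (2 * (k:ℝ)^2)^3) := rfl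
  have hV : suVol k = (Real.sqrt k * (2*π) ^ ((k:ℝ)^2/2 + (k:ℝ)/2 - 1))
      / ∏ j ∈ Finset.Icc 1 (k-1), (j ! : ℝ) := rfl
  rw [hB, hV]
  rw [Real.log_div (by positivity) (by positivity),
      Real.log_div (by positivity) (by positivity),
      Real.log_div (by positivity) (by positivity)]
  rw [Real.log_mul (by positivity) (by positivity),
      Real.log_mul (by positivity) (by positivity)]
  rw [Real.log_rpow hπ, Real.log_rpow hR]
  rw [Real.log_mul (ne_of_gt hΓ3) (by positivity)]
  have hG3exp : Real.log (Gamma3 ((k:ℝ)^2)) = (3/2)*Real.log π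
      + Real.log (Real.Gamma ((k:ℝ)^2)) + Real.log (Real.Gamma ((k:ℝ)^2 - 1/2))
      + Real.log (Real.Gamma ((k:ℝ)^2 - 1)) := by
    unfold Gamma3
    rw [Real.log_mul (by positivity) (ne_of_gt hG3),
        Real.log_mul (by positivity) (ne_of_gt hG2),
        Real.log_mul (by positivity) (ne_of_gt hG1),
        Real.log_rpow hπ]
  rw [hG3exp]
  have hpow3 : Real.log ((2 * (k:ℝ)^2)^3) = 3 * (Real.log 2 + 2 * Real.log k) := by
    rw [Real.log_pow, Real.log_mul (by norm_num) (by positivity), Real.log_pow]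
    push_cast; ring
  rw [hpow3]
  rw [Real.log_mul (ne_of_gt hsq) (ne_of_gt hrpow2π), Real.log_sqrt hx0.le,
      Real.log_rpow (by linarith)]
  rw [Real.log_prod (fun j _ => by exact_mod_cast (Nat.factorial_pos j).ne')]
  ring


/-- The effective moduli-space weight `B(k)/V(k)` decays like `k^{−(11/2)k²}`:
`lim_{k→∞} (log(B(k)/V(k)))/(k² log k) = −11/2`. -/
theorem effective_weight_decay (R : ℝ) (hR : 0 < R) :
    Tendsto (fun k : ℕ =>
        Real.log (ballVol R k / suVol k) / ((k : ℝ) ^ 2 * Real.log (k : ℝ)))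
      atTop (nhds (-11 / 2)) := by
  have hlo := key_lim (Real.log 8 - (3/2)*Real.log π - 3*Real.log 2 + Real.log (2*π))
      (-(1/2)*Real.log (2*π))
      (3*Real.log π + 6*Real.log R - (1/2)*Real.log (2*π) - 2)
      (-13/2) (-1/2) (-11/2)
  have hhi := key_lim (Real.log 8 - (3/2)*Real.log π - 3*Real.log 2 + Real.log (2*π))
      (-(1/2)*Real.log (2*π))
      (3*Real.log π + 6*Real.log R - (1/2)*Real.log (2*π) + 6)
      (11/2) (-1/2) (-11/2)
  refine tendsto_of_tendsto_of_tendsto_of_le_of_le' hlo hhi ?_ ?_ <;>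
  · filter_upwards [eventually_ge_atTop 2] with k hk
    have hx0 : (0:ℝ) < (k:ℝ) := by exact_mod_cast (by omega : 0 < k)
    have hL0 : 0 < Real.log k := Real.log_pos (by exact_mod_cast hk)
    have hk4 : 4 ≤ k^2 := by
      have h := Nat.pow_le_pow_left hk 2; norm_num at h; exact h
    have hk2r : (4:ℝ) ≤ (k:ℝ)^2 := by exact_mod_cast hk4
    have hB1 := fact_log_bounds k (k^2-1) hk (by omega) (by omega)
    have hB3 := fact_log_bounds k (k^2-2) hk (by omega) (by omega)
    have hS := sum_log_fact_bounds k hk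
    have e1 : ((k:ℝ))^2 = ((k^2-1 : ℕ):ℝ) + 1 := by
      rw [Nat.cast_sub (by omega)]; push_cast; ring
    have e3 : (k:ℝ)^2 - 1 = ((k^2-2 : ℕ):ℝ) + 1 := by
      rw [Nat.cast_sub (by omega)]; push_cast; ring
    have hΓ1 : Real.Gamma ((k:ℝ)^2) = ((k^2-1)! : ℝ) := by
      rw [e1]; exact Real.Gamma_nat_eq_factorial _
    have hΓ3 : Real.Gamma ((k:ℝ)^2 - 1) = ((k^2-2)! : ℝ) := by
      rw [e3]; exact Real.Gamma_nat_eq_factorial _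
    have hm1 : ((k:ℝ)^2 - 1) ∈ Set.Ici (2:ℝ) := by
      simp only [Set.mem_Ici]; linarith
    have hm2 : ((k:ℝ)^2 - 1/2) ∈ Set.Ici (2:ℝ) := by
      simp only [Set.mem_Ici]; linarith
    have hm3 : ((k:ℝ)^2) ∈ Set.Ici (2:ℝ) := by
      simp only [Set.mem_Ici]; linarith
    have hmono1 : Real.Gamma ((k:ℝ)^2 - 1) ≤ Real.Gamma ((k:ℝ)^2 - 1/2) :=
      (Real.Gamma_strictMonoOn_Ici hm1 hm2 (by norm_num)).le
    have hmono2 : Real.Gamma ((k:ℝ)^2 - 1/2) ≤ Real.Gamma ((k:ℝ)^2) :=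
      (Real.Gamma_strictMonoOn_Ici hm2 hm3 (by norm_num)).le
    have hG2pos : 0 < Real.Gamma ((k:ℝ)^2 - 1/2) := Real.Gamma_pos_of_pos (by linarith)
    have hG3pos : 0 < Real.Gamma ((k:ℝ)^2 - 1) := Real.Gamma_pos_of_pos (by linarith)
    have hL1 : Real.log (Real.Gamma ((k:ℝ)^2)) = Real.log ((k^2-1)! : ℝ) := by rw [hΓ1]
    have hL3 : Real.log (Real.Gamma ((k:ℝ)^2 - 1)) = Real.log ((k^2-2)! : ℝ) := by rw [hΓ3]
    have hL2a : Real.log (Real.Gamma ((k:ℝ)^2 - 1/2)) ≤ Real.log ((k^2-1)! : ℝ) := by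
      rw [← hL1]; exact Real.log_le_log hG2pos hmono2
    have hL2b : Real.log ((k^2-2)! : ℝ) ≤ Real.log (Real.Gamma ((k:ℝ)^2 - 1/2)) := by
      rw [← hL3]; exact Real.log_le_log hG3pos hmono1
    have hexp := numer_expand R hR k hk
    have hdiv : (0:ℝ) < (k:ℝ)^2 * Real.log k := by positivity
    apply div_le_div_of_nonneg_right ?_ hdiv.le
    rw [hexp]
    linarith [hB1.1, hB1.2, hB3.1, hB3.2, hS.1, hS.2, hL2a, hL2b, hL1, hL3]
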